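/- Let D = (G, S, ≻, query, succ) be a dominion space for a parity game G. Define s₀ := ⊤ and, as long as the pair query(s_i) is an open quasi dominion pair, s_{i+1} := succ(s_i, query(s_i)). Then this sequence is finite; at its last state s the pair (Q, α) := query(s) is closed, and Q is an α-dominion in G. -/

import Mathlib

open Filter Set

/-- A parity game: disjoint finite sets of positions of players 0 and 1, a left-total
move relation among positions, and a priority function. -/
structure PGame (V : Type*) where
  pos0 : Set V
  pos1 : Set V
  mv : V → V → Prop
  pr : V → ℕ
  disj : Disjoint pos0 pos1
  finpos : (pos0 ∪ pos1).Finite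
  mv_mem : ∀ ⦃v u : V⦄, mv v u → v ∈ pos0 ∪ pos1 ∧ u ∈ pos0 ∪ pos1
  leftTotal : ∀ v ∈ pos0 ∪ pos1, ∃ u, mv v u

namespace PGame

variable {V : Type*}

/-- The set of positions of the game. -/
def pos (G : PGame V) : Set V := G.pos0 ∪ G.pos1

/-- The positions of player `α` (`α ∈ {0,1}`; the opponent of `α` is `1 - α`). -/
def posOf (G : PGame V) (α : ℕ) : Set V := if α = 0 then G.pos0 else G.pos1

/-- The maximal priority `pr(G)` of the game. -/
noncomputable def maxPr (G : PGame V) : ℕ := sSup (G.pr '' G.pos)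

/-- `pre^α(U)`: positions from which player `α` can force reaching `U` in one move. -/
def pre (G : PGame V) (α : ℕ) (U : Set V) : Set V :=
  {v ∈ G.posOf α | ∃ u ∈ U, G.mv v u} ∪
    {v ∈ G.posOf (1 - α) | ∀ u, G.mv v u → u ∈ U}

lemma pre_mono (G : PGame V) (α : ℕ) : Monotone (G.pre α) := by
  intro U U' h v hv
  rcases hv with ⟨h1, u, hu, hm⟩ | ⟨h1, h2⟩
  · exact Or.inl ⟨h1, u, h hu, hm⟩
  · exact Or.inr ⟨h1, fun u hm => h (h2 u hm)⟩

/-- `atr^α(A)`: the `α`-attractor of `A`, the least fixed point of `U ↦ A ∪ pre^α(U)`. -/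
noncomputable def atr (G : PGame V) (α : ℕ) (A : Set V) : Set V :=
  OrderHom.lfp ⟨fun U => A ∪ G.pre α U, fun U U' h => union_subset_union subset_rfl (G.pre_mono α h)⟩

/-- `A` is `α`-maximal if it coincides with its own `α`-attractor. -/
def IsMaximal (G : PGame V) (α : ℕ) (A : Set V) : Prop := G.atr α A = A

/-- `esc^α(Q)`: the `α`-escape of `Q`. -/
def esc (G : PGame V) (α : ℕ) (Q : Set V) : Set V := G.pre α (G.pos \ Q) ∩ Q

/-- `int^α(Q)`: the `α`-interior of `Q`. -/
def intOf (G : PGame V) (α : ℕ) (Q : Set V) : Set V := (Q ∩ G.posOf α) \ G.esc α Q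

/-- A positional `α`-strategy on `U`: a partial function (encoded with `Option`) from
`U ∩ Pos_α` to `U` compatible with the move relation. -/
def IsStrat (G : PGame V) (α : ℕ) (U : Set V) (σ : V → Option V) : Prop :=
  ∀ v u, σ v = some u → v ∈ U ∩ G.posOf α ∧ u ∈ U ∧ G.mv v u

-- One step of the play function: from `v`, player 0 positions move according to `σ0`,
-- the others according to `σ1`.
open Classical in
noncomputable def step (G : PGame V) (σ0 σ1 : V → Option V) (v : V) : Option V :=
  if v ∈ G.pos0 then σ0 v else σ1 v

/-- The maximal play induced by the pair of strategies `(σ0, σ1)` from `v`,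
as a sequence of `Option`s (`none` from the point the play has stopped on). -/
noncomputable def play (G : PGame V) (σ0 σ1 : V → Option V) (v : V) : ℕ → Option V
  | 0 => some v
  | n + 1 => (G.play σ0 σ1 v n).bind (G.step σ0 σ1)

/-- The priorities visited along a play (defaulting to `0` after the play has stopped). -/
noncomputable def playPr (G : PGame V) (σ0 σ1 : V → Option V) (v : V) (n : ℕ) : ℕ :=
  ((G.play σ0 σ1 v n).map G.pr).getD 0

/-- `Q` is a quasi `α`-dominion in `G`. -/
noncomputable def QuasiDom (G : PGame V) (α : ℕ) (Q : Set V) : Prop :=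
  Q.Nonempty ∧ Q ⊆ G.pos ∧
  ∃ σa : V → Option V, G.IsStrat α Q σa ∧
    ∀ σb : V → Option V, G.IsStrat (1 - α) Q σb →
      G.intOf (1 - α) Q ⊆ {v | (σb v).isSome} →
      ∀ v ∈ Q,
        (((∀ n, (G.play (if α = 0 then σa else σb) (if α = 0 then σb else σa) v n).isSome) →
          Filter.limsup (G.playPr (if α = 0 then σa else σb) (if α = 0 then σb else σa) v)
            Filter.atTop % 2 = α) ∧
        (∀ n u, G.play (if α = 0 then σa else σb) (if α = 0 then σb else σa) v n = some u →
          G.play (if α = 0 then σa else σb) (if α = 0 then σb else σa) v (n + 1) = none →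
          u ∈ G.esc (1 - α) Q))

/-- A quasi `α`-dominion `R` is an `α`-region of `G` when `pr(G) ≡₂ α` and all the
positions in its `ᾱ`-escape have the maximal priority `pr(G)`. -/
noncomputable def IsRegion (G : PGame V) (α : ℕ) (R : Set V) : Prop :=
  G.QuasiDom α R ∧ G.maxPr % 2 = α ∧ ∀ v ∈ G.esc (1 - α) R, G.pr v = G.maxPr

/-- `D` is an `α`-dominion in `G`: player `α` has a strategy defined on all of
`D ∩ Pos_α` such that all induced paths starting in `D` stay in `D` forever and are
winning for `α`. -/
noncomputable def Dominion (G : PGame V) (α : ℕ) (D : Set V) : Prop :=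
  D ⊆ G.pos ∧
  ∃ σ : V → V, (∀ v ∈ D ∩ G.posOf α, σ v ∈ D ∧ G.mv v (σ v)) ∧
    ∀ π : ℕ → V, π 0 ∈ D →
      (∀ i, (π i ∈ G.posOf α → π (i + 1) = σ (π i)) ∧
            (π i ∈ G.posOf (1 - α) → G.mv (π i) (π (i + 1)))) →
      (∀ i, π i ∈ D) ∧ Filter.limsup (fun i => G.pr (π i)) Filter.atTop % 2 = α

/-- The winning region of player `α` in `G`. -/
noncomputable def Win (G : PGame V) (α : ℕ) : Set V :=
  {v ∈ G.pos | ∃ σ : V → V, (∀ u ∈ G.posOf α, G.mv u (σ u)) ∧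
    ∀ π : ℕ → V, π 0 = v →
      (∀ i, (π i ∈ G.posOf α → π (i + 1) = σ (π i)) ∧
            (π i ∈ G.posOf (1 - α) → G.mv (π i) (π (i + 1)))) →
      Filter.limsup (fun i => G.pr (π i)) Filter.atTop % 2 = α}

/-- The set of positions of the subgame `G ∖ U`: the largest subset of `Pos ∖ U` on
which the restricted move relation is still left-total. -/
def subPos (G : PGame V) (U : Set V) : Set V :=
  ⋃₀ {S : Set V | S ⊆ G.pos \ U ∧ ∀ v ∈ S, ∃ u ∈ S, G.mv v u}

lemma subPos_subset (G : PGame V) (U : Set V) : G.subPos U ⊆ G.pos \ U := by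
  rintro v ⟨S, ⟨hS1, _⟩, hvS⟩
  exact hS1 hvS

lemma subPos_step (G : PGame V) (U : Set V) :
    ∀ v ∈ G.subPos U, ∃ u ∈ G.subPos U, G.mv v u := by
  rintro v ⟨S, hS, hvS⟩
  rcases hS.2 v hvS with ⟨u, huS, hm⟩
  exact ⟨u, ⟨S, hS, huS⟩, hm⟩

/-- The subgame `G ∖ U`: the maximal subgame of `G` whose positions are contained in
`Pos ∖ U`, with the restricted move relation. -/
noncomputable def sub (G : PGame V) (U : Set V) : PGame V where
  pos0 := G.pos0 ∩ G.subPos U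
  pos1 := G.pos1 ∩ G.subPos U
  mv v u := G.mv v u ∧ v ∈ G.subPos U ∧ u ∈ G.subPos U
  pr := G.pr
  disj := G.disj.mono inter_subset_left inter_subset_left
  finpos := G.finpos.subset (union_subset_union inter_subset_left inter_subset_left)
  mv_mem := by
    rintro v u ⟨hm, hv, hu⟩
    have hv' : v ∈ G.pos := (G.subPos_subset U hv).1
    have hu' : u ∈ G.pos := (G.subPos_subset U hu).1
    constructor
    · rcases hv' with h | h
      · exact Or.inl ⟨h, hv⟩
      · exact Or.inr ⟨h, hv⟩
    · rcases hu' with h | h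
      · exact Or.inl ⟨h, hu⟩
      · exact Or.inr ⟨h, hu⟩
  leftTotal := by
    intro v hv
    have hv' : v ∈ G.subPos U := by
      rcases hv with ⟨_, h⟩ | ⟨_, h⟩ <;> exact h
    rcases G.subPos_step U v hv' with ⟨u, hu, hm⟩
    exact ⟨u, hm, hv', hu⟩

end PGame

open PGame in
/-- A dominion space for a parity game `G`: a well-founded strict partial order of
states with a top element, a compatibility relation between states and open quasi
dominion pairs, a query operator extracting quasi dominion pairs (compatible with the
state whenever open), and a successor operator decreasing in the order on compatible
pairs. -/
structure DomSpace {V : Type*} (G : PGame V) where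
  S : Type*
  top : S
  lt : S → S → Prop
  lt_trans : Transitive lt
  lt_irrefl : Irreflexive lt
  wf : WellFounded lt
  compat : S → Set V × ℕ → Prop
  compat_mem : ∀ s Q α, compat s (Q, α) →
    (α = 0 ∨ α = 1) ∧ G.QuasiDom α Q ∧ G.esc (1 - α) Q ≠ ∅
  query : S → Set V × ℕ
  query_mem : ∀ s, ((query s).2 = 0 ∨ (query s).2 = 1) ∧ G.QuasiDom (query s).2 (query s).1
  query_compat : ∀ s, G.esc (1 - (query s).2) (query s).1 ≠ ∅ → compat s (query s)
  succ : S → Set V × ℕ → S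
  succ_lt : ∀ s Qα, compat s Qα → lt (succ s Qα) s


section DominionSearchAux

open Filter Set PGame

variable {V : Type*}

private lemma aux_limsup_eq (f : ℕ → ℕ) {m N : ℕ} (h1 : ∀ t, N ≤ t → f t ≤ m)
    (h2 : ∀ t, ∃ t', t ≤ t' ∧ f t' = m) : Filter.limsup f Filter.atTop = m := by
  rw [Filter.limsup_eq]
  apply le_antisymm
  · exact csInf_le (OrderBot.bddBelow _)
      (by filter_upwards [eventually_ge_atTop N] with t ht using h1 t ht)
  · refine le_csInf ⟨m, by filter_upwards [eventually_ge_atTop N] with t ht using h1 t ht⟩ ?_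
    intro a ha
    simp only [Set.mem_setOf_eq, eventually_atTop] at ha
    obtain ⟨N', hN'⟩ := ha
    obtain ⟨t', ht', hft'⟩ := h2 N'
    exact hft' ▸ hN' t' ht'

private lemma aux_pos_eq (G : PGame V) {α : ℕ} (hα : α = 0 ∨ α = 1) :
    G.pos = G.posOf α ∪ G.posOf (1 - α) := by
  rcases hα with rfl | rfl <;> simp [PGame.pos, PGame.posOf, Set.union_comm]

private lemma aux_step_player (G : PGame V) {α : ℕ} (hα : α = 0 ∨ α = 1)
    (σa σb : V → Option V) {v : V} (hv : v ∈ G.posOf α) :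
    G.step (if α = 0 then σa else σb) (if α = 0 then σb else σa) v = σa v := by
  rcases hα with rfl | rfl
  · have hv0 : v ∈ G.pos0 := by simpa [PGame.posOf] using hv
    simp [PGame.step, hv0]
  · have hv1 : v ∈ G.pos1 := by simpa [PGame.posOf] using hv
    have hnot : v ∉ G.pos0 := Set.disjoint_right.mp G.disj hv1
    simp [PGame.step, hnot]

private lemma aux_step_opp (G : PGame V) {α : ℕ} (hα : α = 0 ∨ α = 1)
    (σa σb : V → Option V) {v : V} (hv : v ∈ G.posOf (1 - α)) :
    G.step (if α = 0 then σa else σb) (if α = 0 then σb else σa) v = σb v := by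
  rcases hα with rfl | rfl
  · have hv1 : v ∈ G.pos1 := by simpa [PGame.posOf] using hv
    have hnot : v ∉ G.pos0 := Set.disjoint_right.mp G.disj hv1
    simp [PGame.step, hnot]
  · have hv0 : v ∈ G.pos0 := by simpa [PGame.posOf] using hv
    simp [PGame.step, hv0]

/-- The key lemma: a closed quasi `α`-dominion is an `α`-dominion. -/
private lemma aux_dominion_of_closed (G : PGame V) {α : ℕ} (hα : α = 0 ∨ α = 1)
    {Q : Set V} (hQD : G.QuasiDom α Q) (hcl : G.esc (1 - α) Q = ∅) :
    G.Dominion α Q := by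
  classical
  obtain ⟨hne, hQpos, σa, hσa, hP⟩ := hQD
  -- every move from an opponent position of Q stays in Q
  have hsucc : ∀ v ∈ Q, v ∈ G.posOf (1 - α) → ∀ u, G.mv v u → u ∈ Q := by
    intro v hvQ hvB u hm
    by_contra huQ
    have : v ∈ G.esc (1 - α) Q :=
      ⟨Or.inl ⟨hvB, u, ⟨(G.mv_mem hm).2, huQ⟩, hm⟩, hvQ⟩
    rw [hcl] at this
    exact this
  -- canonical opponent strategy
  have hexQ : ∀ v, v ∈ Q ∧ v ∈ G.posOf (1 - α) → ∃ u, u ∈ Q ∧ G.mv v u := by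
    rintro v ⟨hvQ, hvB⟩
    obtain ⟨u, hu⟩ := G.leftTotal v (hQpos hvQ)
    exact ⟨u, hsucc v hvQ hvB u hu, hu⟩
  let σb0 : V → Option V := fun v =>
    if h : v ∈ Q ∧ v ∈ G.posOf (1 - α) then some (Classical.choose (hexQ v h)) else none
  have hσb0 : G.IsStrat (1 - α) Q σb0 := by
    intro v u hvu
    simp only [σb0] at hvu
    split_ifs at hvu with h
    obtain ⟨h1, h2⟩ := Classical.choose_spec (hexQ v h)
    cases Option.some.inj hvu
    exact ⟨⟨h.1, h.2⟩, h1, h2⟩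
  have hσb0dom : G.intOf (1 - α) Q ⊆ {v | (σb0 v).isSome} := by
    rintro v ⟨⟨hvQ, hvB⟩, -⟩
    simp only [Set.mem_setOf_eq, σb0, dif_pos (And.intro hvQ hvB), Option.isSome_some]
  -- plays never die
  have hnodie : ∀ σb : V → Option V, G.IsStrat (1 - α) Q σb →
      G.intOf (1 - α) Q ⊆ {v | (σb v).isSome} → ∀ v ∈ Q, ∀ n,
      (G.play (if α = 0 then σa else σb) (if α = 0 then σb else σa) v n).isSome := by
    intro σb hσb hσbdom v hv n
    induction n with
    | zero => simp [PGame.play]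
    | succ n ih =>
      obtain ⟨u, hu⟩ := Option.isSome_iff_exists.mp ih
      by_contra hnone
      rw [Option.not_isSome_iff_eq_none] at hnone
      have := (hP σb hσb hσbdom v hv).2 n u hu hnone
      rw [hcl] at this
      exact this
  -- σa is total on Q ∩ posOf α
  have htot : ∀ v, v ∈ Q → v ∈ G.posOf α → ∃ u, σa v = some u ∧ u ∈ Q ∧ G.mv v u := by
    intro v hvQ hvA
    have h1 := hnodie σb0 hσb0 hσb0dom v hvQ 1
    have hpl : G.play (if α = 0 then σa else σb0) (if α = 0 then σb0 else σa) v 1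
        = σa v := by
      show ((some v).bind _) = _
      rw [Option.bind_some]
      exact aux_step_player G hα σa σb0 hvA
    rw [hpl] at h1
    obtain ⟨u, hu⟩ := Option.isSome_iff_exists.mp h1
    obtain ⟨-, h2, h3⟩ := hσa v u hu
    exact ⟨u, hu, h2, h3⟩
  let σ : V → V := fun v => (σa v).getD v
  have hσval : ∀ v, v ∈ Q → v ∈ G.posOf α → σ v ∈ Q ∧ G.mv v (σ v) ∧ σa v = some (σ v) := by
    intro v hvQ hvA
    obtain ⟨u, hu, huQ, hm⟩ := htot v hvQ hvA
    have : σ v = u := by simp [σ, hu]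
    rw [this]
    exact ⟨huQ, hm, hu⟩
  refine ⟨hQpos, σ, fun v hv => ⟨(hσval v hv.1 hv.2).1, (hσval v hv.1 hv.2).2.1⟩, ?_⟩
  intro π hπ0 hπc
  -- the path stays in Q
  have hπQ : ∀ i, π i ∈ Q := by
    intro i
    induction i with
    | zero => exact hπ0
    | succ i ih =>
      have hpos := hQpos ih
      rw [aux_pos_eq G hα] at hpos
      rcases hpos with hA | hB
      · rw [(hπc i).1 hA]
        exact (hσval _ ih hA).1
      · exact hsucc _ ih hB _ ((hπc i).2 hB)
  refine ⟨hπQ, ?_⟩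
  -- infinitely occurring vertices
  have hQfin : Q.Finite := G.finpos.subset hQpos
  let I : Set V := {v ∈ Q | {i | π i = v}.Infinite}
  have hIne : I.Nonempty := by
    by_contra hIe
    rw [Set.not_nonempty_iff_eq_empty] at hIe
    have hfin : ∀ v ∈ Q, {i | π i = v}.Finite := by
      intro v hv
      by_contra hinf
      have : v ∈ I := ⟨hv, hinf⟩
      rw [hIe] at this; exact this
    have : (Set.univ : Set ℕ).Finite := by
      have hsub : (Set.univ : Set ℕ) ⊆ ⋃ v ∈ Q, {i | π i = v} := by
        intro i _
        exact Set.mem_biUnion (hπQ i) rfl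
      exact ((hQfin.biUnion hfin).subset hsub)
    exact Set.infinite_univ this
  have hIfin : I.Finite := hQfin.subset fun v hv => hv.1
  obtain ⟨w, hwI, hwmax⟩ : ∃ w ∈ I, ∀ v ∈ I, G.pr w ≤ G.pr v → G.pr w = G.pr v := by
    obtain ⟨w, hw, h⟩ := Set.exists_max_image I G.pr hIfin hIne
    exact ⟨w, hw, fun v hv h' => le_antisymm h' (h v hv)⟩
  set m := G.pr w with hm
  have hIle : ∀ v ∈ I, G.pr v ≤ m := by
    intro v hv
    rcases le_total (G.pr v) m with h | h
    · exact h
    · exact le_of_eq (hwmax v hv h).symm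
  -- eventually the path stays in I
  have hbadfin : {i | π i ∉ I}.Finite := by
    have hsub : {i | π i ∉ I} ⊆ ⋃ v ∈ Q \ I, {i | π i = v} := by
      intro i hi
      exact Set.mem_biUnion ⟨hπQ i, hi⟩ rfl
    refine ((hQfin.diff (t := I)).biUnion ?_).subset hsub
    intro v hv
    by_contra hinf
    exact hv.2 ⟨hv.1, hinf⟩
  obtain ⟨N, hN⟩ := hbadfin.bddAbove
  have hIN : ∀ i, N + 1 ≤ i → π i ∈ I := by
    intro i hi
    by_contra hbad
    exact absurd (hN hbad) (by omega)
  have hwfreq : ∀ t, ∃ t', t ≤ t' ∧ π t' = w := by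
    intro t
    obtain ⟨b, hb, htb⟩ := hwI.2.exists_gt t
    exact ⟨b, le_of_lt htb, hb⟩
  -- priorities along the tail are bounded by m, with value m infinitely often
  have hprle : ∀ i, N + 1 ≤ i → G.pr (π i) ≤ m := fun i hi => hIle _ (hIN i hi)
  have hprfreq : ∀ t, ∃ t', t ≤ t' ∧ G.pr (π t') = m := by
    intro t
    obtain ⟨t', ht', hw'⟩ := hwfreq t
    exact ⟨t', ht', by rw [hw']⟩
  have hlimsup : Filter.limsup (fun i => G.pr (π i)) Filter.atTop = m :=
    aux_limsup_eq _ hprle hprfreq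
  rw [hlimsup]
  -- it remains to show m % 2 = α, via a pumped positional counter-strategy
  obtain ⟨n0, hn0N, hn0w⟩ : ∃ n0, N + 1 ≤ n0 ∧ π n0 = w := hwfreq (N + 1)
  obtain ⟨n1, hn1gt, hn1w⟩ : ∃ n1, n0 < n1 ∧ π n1 = w := by
    obtain ⟨t', ht', hw'⟩ := hwfreq (n0 + 1)
    exact ⟨t', by omega, hw'⟩
  -- last occurrence of a vertex in [n0, n1)
  let L : V → ℕ := fun v => sSup {j | n0 ≤ j ∧ j < n1 ∧ π j = v}
  have hLmem : ∀ v, (∃ j, n0 ≤ j ∧ j < n1 ∧ π j = v) →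
      n0 ≤ L v ∧ L v < n1 ∧ π (L v) = v := by
    intro v hv
    have hbdd : BddAbove {j | n0 ≤ j ∧ j < n1 ∧ π j = v} :=
      ⟨n1, fun j hj => le_of_lt hj.2.1⟩
    exact Nat.sSup_mem hv hbdd
  have hLge : ∀ j, n0 ≤ j → j < n1 → j ≤ L (π j) := by
    intro j h1 h2
    exact le_csSup ⟨n1, fun i hi => le_of_lt hi.2.1⟩ ⟨h1, h2, rfl⟩
  -- the pumping counter-strategy
  let σb : V → Option V := fun v =>
    if h : v ∈ G.posOf (1 - α) ∧ ∃ j, n0 ≤ j ∧ j < n1 ∧ π j = v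
    then some (π (L v + 1)) else σb0 v
  have hσb : G.IsStrat (1 - α) Q σb := by
    intro v u hvu
    simp only [σb] at hvu
    split_ifs at hvu with h
    · cases Option.some.inj hvu
      obtain ⟨hL0, hL1, hLv⟩ := hLmem v h.2
      have hvQ : v ∈ Q := hLv ▸ hπQ (L v)
      have hmv : G.mv v (π (L v + 1)) := by
        have h2 : π (L v) ∈ G.posOf (1 - α) := by rw [hLv]; exact h.1
        have := (hπc (L v)).2 h2
        rwa [hLv] at this
      exact ⟨⟨hvQ, h.1⟩, hsucc v hvQ h.1 _ hmv, hmv⟩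
    · exact hσb0 v u hvu
  have hσbdom : G.intOf (1 - α) Q ⊆ {v | (σb v).isSome} := by
    rintro v hv
    simp only [Set.mem_setOf_eq, σb]
    split_ifs with h
    · simp
    · exact hσb0dom hv
  set σ0 := if α = 0 then σa else σb with hσ0
  set σ1 := if α = 0 then σb else σa with hσ1
  -- one step of the pumped play
  have hstepL : ∀ v, (∃ j, n0 ≤ j ∧ j < n1 ∧ π j = v) →
      G.step σ0 σ1 v = some (π (L v + 1)) := by
    intro v hocc
    obtain ⟨hL0, hL1, hLv⟩ := hLmem v hocc
    have hvQ : v ∈ Q := hLv ▸ hπQ (L v)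
    have hvpos := hQpos hvQ
    rw [aux_pos_eq G hα] at hvpos
    rcases hvpos with hA | hB
    · rw [hσ0, hσ1, aux_step_player G hα σa σb hA]
      obtain ⟨huQ, hmv, hval⟩ := hσval v hvQ hA
      rw [hval]
      congr 1
      have hA' : π (L v) ∈ G.posOf α := by rw [hLv]; exact hA
      have := (hπc (L v)).1 hA'
      rw [hLv] at this
      rw [this]
    · rw [hσ0, hσ1, aux_step_opp G hα σa σb hB]
      simp only [σb, dif_pos (And.intro hB hocc)]
  -- the index sequence of the pumped play
  let ψ : ℕ → ℕ := fun t => Nat.rec n0 (fun _ prev => L (π prev) + 1) t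
  have hψ0 : ψ 0 = n0 := rfl
  have hψs : ∀ t, ψ (t + 1) = L (π (ψ t)) + 1 := fun t => rfl
  have hocc : ∀ t, n0 ≤ ψ t → ψ t ≤ n1 → ∃ j, n0 ≤ j ∧ j < n1 ∧ π j = π (ψ t) := by
    intro t h1 h2
    rcases lt_or_eq_of_le h2 with h | h
    · exact ⟨ψ t, h1, h, rfl⟩
    · exact ⟨n0, le_refl n0, hn1gt, by rw [hn0w, h, hn1w]⟩
  have hψinv : ∀ t, (n0 ≤ ψ t ∧ ψ t ≤ n1) ∧
      G.play σ0 σ1 w t = some (π (ψ t)) := by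
    intro t
    induction t with
    | zero =>
      exact ⟨⟨le_refl n0, le_of_lt hn1gt⟩, by rw [hψ0, hn0w]; rfl⟩
    | succ t ih =>
      obtain ⟨⟨h1, h2⟩, hpl⟩ := ih
      obtain ⟨hL0, hL1, -⟩ := hLmem _ (hocc t h1 h2)
      constructor
      · rw [hψs t]; omega
      · show (G.play σ0 σ1 w t).bind (G.step σ0 σ1) = _
        rw [hpl, Option.bind_some, hstepL _ (hocc t h1 h2), hψs t]
  have hψlt : ∀ t, ψ t < n1 → ψ t < ψ (t + 1) := by
    intro t h
    have h1 := (hψinv t).1.1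
    have := hLge (ψ t) h1 h
    rw [hψs t]
    omega
  have hψhit : ∀ t, ∃ t', t ≤ t' ∧ ψ t' = n1 := by
    have key : ∀ k t, n1 - ψ t ≤ k → ∃ t', t ≤ t' ∧ ψ t' = n1 := by
      intro k
      induction k with
      | zero =>
        intro t ht
        exact ⟨t, le_refl t, by have := (hψinv t).1.2; omega⟩
      | succ k ih =>
        intro t ht
        rcases eq_or_lt_of_le (hψinv t).1.2 with h | h
        · exact ⟨t, le_refl t, h⟩
        · obtain ⟨t', ht', hψt'⟩ := ih (t + 1) (by have := hψlt t h; omega)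
          exact ⟨t', by omega, hψt'⟩
    intro t
    exact key (n1 - ψ t) t (le_refl _)
  -- the pumped play is infinite with limsup priority m
  have hplsome : ∀ n, (G.play σ0 σ1 w n).isSome := by
    intro n
    rw [(hψinv n).2]
    simp
  have hplpr : ∀ t, G.playPr σ0 σ1 w t = G.pr (π (ψ t)) := by
    intro t
    unfold PGame.playPr
    rw [(hψinv t).2]
    rfl
  have hprle' : ∀ t, 0 ≤ t → G.playPr σ0 σ1 w t ≤ m := by
    intro t _
    rw [hplpr t]
    have h1 := (hψinv t).1.1
    exact hprle _ (by omega)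
  have hprfreq' : ∀ t, ∃ t', t ≤ t' ∧ G.playPr σ0 σ1 w t' = m := by
    intro t
    obtain ⟨t', ht', hψt'⟩ := hψhit t
    exact ⟨t', ht', by rw [hplpr t', hψt', hn1w]⟩
  have hlimsup' : Filter.limsup (G.playPr σ0 σ1 w) Filter.atTop = m :=
    aux_limsup_eq _ hprle' hprfreq'
  have hwin := (hP σb hσb hσbdom w (hn0w ▸ hπQ n0)).1
  rw [← hσ0, ← hσ1] at hwin
  have := hwin hplsome
  rwa [hlimsup'] at this

end DominionSearchAux

/-- **Soundness and completeness of the dominion search procedure.** Starting from the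
top state and repeatedly applying the successor operator to the queried quasi dominion
pair, the search eventually reaches a state whose queried pair `(Q, α)` is closed, and
then `Q` is an `α`-dominion in `G`. -/


theorem dominion_search {V : Type*} (G : PGame V) (D : DomSpace G)
    (f : ℕ → D.S) (h0 : f 0 = D.top)
    (hstep : ∀ n, f (n + 1) = D.succ (f n) (D.query (f n))) :
    ∃ n, (∀ i < n, G.esc (1 - (D.query (f i)).2) (D.query (f i)).1 ≠ ∅) ∧
      G.esc (1 - (D.query (f n)).2) (D.query (f n)).1 = ∅ ∧
      G.Dominion (D.query (f n)).2 (D.query (f n)).1 := by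
  classical
  have hex : ∃ n, G.esc (1 - (D.query (f n)).2) (D.query (f n)).1 = ∅ := by
    by_contra h
    push_neg at h
    have hlt : ∀ n, D.lt (f (n + 1)) (f n) := by
      intro n
      rw [hstep n]
      exact D.succ_lt _ _ (D.query_compat (f n) (Set.nonempty_iff_ne_empty.mp (h n)))
    obtain ⟨a, ⟨n, rfl⟩, hmin⟩ := D.wf.has_min (Set.range f) ⟨f 0, 0, rfl⟩
    exact hmin (f (n + 1)) ⟨n + 1, rfl⟩ (hlt n)
  refine ⟨Nat.find hex, fun i hi => Nat.find_min hex hi, Nat.find_spec hex, ?_⟩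
  obtain ⟨hα, hQD⟩ := D.query_mem (f (Nat.find hex))
  exact aux_dominion_of_closed G hα hQD (Nat.find_spec hex)
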